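/- arXiv:1212.0899 — 7 statements merged into one kernel-verified Lean document; each statement's English description precedes it below -/
import Mathlib

section
/- Let X be a separable metric space, A a subset of X, K a separable metric ANR, and f : A → K a continuous map. Then for every ε > 0 there exist an open set U ⊆ X with A ⊆ U and a continuous map g : U → K such that g(U) is contained in the ε-neighborhood of f(A) in K, and the restriction g|_A is homotopic to f. -/
open Set Metric TopologicalSpace

/-- A metrizable space `K` is an ANR (absolute neighborhood retract) if, whenever it
is embedded as a closed subspace of a metrizable space, it is a retract of some open
neighborhood of itself. -/
def IsANR (K : Type u) [TopologicalSpace K] : Prop :=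
  MetrizableSpace K ∧
    ∀ (Z : Type u) [MetricSpace Z] (e : K → Z), Topology.IsClosedEmbedding e →
      ∃ (U : Set Z) (_ : IsOpen U) (hU : ∀ x, e x ∈ U) (r : C(U, K)),
        ∀ x : K, r ⟨e x, hU x⟩ = x

namespace WalshAux


universe u

variable {K : Type u} [MetricSpace K]

/-- The Kuratowski-type embedding of a metric space into bounded continuous functions. -/
noncomputable def phi (x₀ x : K) : BoundedContinuousFunction K ℝ :=
  BoundedContinuousFunction.mkOfBound
    ⟨fun y => dist x y - dist x₀ y, by fun_prop⟩ (2 * dist x x₀)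
    (fun y z => by
      have hy := abs_le.1 (abs_dist_sub_le x x₀ y)
      have hz := abs_le.1 (abs_dist_sub_le x x₀ z)
      rw [Real.dist_eq]
      refine abs_le.2 ⟨?_, ?_⟩ <;> simp only [ContinuousMap.coe_mk] <;>
        [linarith [hy.1, hz.2]; linarith [hy.2, hz.1]])

theorem phi_apply (x₀ x y : K) : phi x₀ x y = dist x y - dist x₀ y := rfl

theorem phi_isometry (x₀ : K) : Isometry (phi x₀) := by
  refine Isometry.of_dist_eq fun x x' => ?_
  apply le_antisymm
  · refine (BoundedContinuousFunction.dist_le dist_nonneg).2 fun y => ?_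
    rw [Real.dist_eq]
    have h : phi x₀ x y - phi x₀ x' y = dist x y - dist x' y := by
      simp [phi_apply]
    rw [h]
    exact abs_dist_sub_le x x' y
  · have h := BoundedContinuousFunction.dist_coe_le_dist (f := phi x₀ x) (g := phi x₀ x') x'
    rw [Real.dist_eq] at h
    have h2 : phi x₀ x x' - phi x₀ x' x' = dist x x' := by simp [phi_apply]
    calc dist x x' = |phi x₀ x x' - phi x₀ x' x'| := by
          rw [h2, abs_of_nonneg dist_nonneg]
      _ ≤ dist (phi x₀ x) (phi x₀ x') := h

/-- Wojdysławski's lemma: the image of the Kuratowski embedding is closed in its convex hull. -/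
theorem mem_range_phi (x₀ : K) {z : BoundedContinuousFunction K ℝ}
    (hz : z ∈ convexHull ℝ (Set.range (phi x₀)))
    (happ : ∀ ε > 0, ∃ x : K, dist (phi x₀ x) z < ε) :
    z ∈ Set.range (phi x₀) := by
  rw [convexHull_eq] at hz
  obtain ⟨ι, t, w, p, hw0, hw1, hp, hzc⟩ := hz
  rw [Finset.centerMass_eq_of_sum_1 _ _ hw1] at hzc
  obtain ⟨i₀, hi₀t, hi₀⟩ := Finset.exists_ne_zero_of_sum_ne_zero
    (by rw [hw1]; exact one_ne_zero)
  have hi₀pos : 0 < w i₀ := lt_of_le_of_ne (hw0 i₀ hi₀t) (Ne.symm hi₀)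
  have hqex : ∀ i : ι, ∃ y : K, i ∈ t → phi x₀ y = p i := by
    intro i
    by_cases h : i ∈ t
    · obtain ⟨y, hy⟩ := hp i h
      exact ⟨y, fun _ => hy⟩
    · exact ⟨x₀, fun h' => absurd h' h⟩
  choose q hq using hqex
  have key : ∀ x : K, ∑ i ∈ t, w i * dist (q i) x ≤ dist (phi x₀ x) z := by
    intro x
    have h := BoundedContinuousFunction.dist_coe_le_dist (f := phi x₀ x) (g := z) x
    have hzx : z x = ∑ i ∈ t, w i * (dist (q i) x - dist x₀ x) := by
      rw [← hzc]
      rw [show ((∑ i ∈ t, w i • p i : BoundedContinuousFunction K ℝ)) x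
          = ∑ i ∈ t, (w i • p i) x from by
        rw [BoundedContinuousFunction.coe_sum, Finset.sum_apply]]
      refine Finset.sum_congr rfl fun i hi => ?_
      rw [← hq i hi]
      simp [phi_apply]
    have hS : 0 ≤ ∑ i ∈ t, w i * dist (q i) x :=
      Finset.sum_nonneg fun i hi => mul_nonneg (hw0 i hi) dist_nonneg
    have he : phi x₀ x x - z x = -(∑ i ∈ t, w i * dist (q i) x) := by
      rw [hzx, phi_apply]
      have hsum : ∑ i ∈ t, w i * (dist (q i) x - dist x₀ x)
          = (∑ i ∈ t, w i * dist (q i) x) - dist x₀ x := by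
        simp only [mul_sub, Finset.sum_sub_distrib, ← Finset.sum_mul, hw1, one_mul]
      rw [hsum, dist_self]
      ring
    rw [Real.dist_eq, he, abs_neg, abs_of_nonneg hS] at h
    exact h
  have hdist : dist z (phi x₀ (q i₀)) ≤ 0 := by
    refine le_of_forall_pos_le_add fun ε hεp => ?_
    obtain ⟨x, hx⟩ := happ (min (ε / 2) (ε / 2 * w i₀)) (by positivity)
    have h1 : w i₀ * dist (q i₀) x ≤ dist (phi x₀ x) z :=
      le_trans (Finset.single_le_sum
        (fun i hi => mul_nonneg (hw0 i hi) dist_nonneg) hi₀t) (key x)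
    have h2 : w i₀ * dist (q i₀) x < w i₀ * (ε / 2) := by
      calc w i₀ * dist (q i₀) x ≤ dist (phi x₀ x) z := h1
        _ < min (ε / 2) (ε / 2 * w i₀) := hx
        _ ≤ ε / 2 * w i₀ := min_le_right _ _
        _ = w i₀ * (ε / 2) := mul_comm _ _
    have h3 : dist (q i₀) x < ε / 2 := (mul_lt_mul_iff_right₀ hi₀pos).1 h2
    calc dist z (phi x₀ (q i₀))
        ≤ dist z (phi x₀ x) + dist (phi x₀ x) (phi x₀ (q i₀)) := dist_triangle _ _ _
      _ = dist (phi x₀ x) z + dist x (q i₀) := by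
          rw [dist_comm z, (phi_isometry x₀).dist_eq]
      _ ≤ ε / 2 + ε / 2 := add_le_add (le_trans hx.le (min_le_left _ _))
          (by rw [dist_comm]; exact h3.le)
      _ ≤ 0 + ε := by linarith
  exact ⟨q i₀, (dist_le_zero.1 hdist).symm⟩

end WalshAux

open WalshAux

/-- **Walsh Lemma.** Let `X` be a separable metric space, `A ⊆ X`, `K` a
separable metric ANR and `f : A → K` continuous. Then for every `ε > 0` there are an
open set `U ⊇ A` and a continuous `g : U → K` with `g(U)` contained in the
`ε`-neighborhood of `f(A)`, and `g|_A` homotopic to `f`. -/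
theorem walsh_lemma {X : Type v} [MetricSpace X] [SeparableSpace X] (A : Set X)
    (K : Type u) [MetricSpace K] [SeparableSpace K] (hK : IsANR K)
    (f : C(A, K)) (ε : ℝ) (hε : 0 < ε) :
    ∃ (U : Set X) (_ : IsOpen U) (hAU : A ⊆ U) (g : C(U, K)),
      (∀ u : U, g u ∈ Metric.thickening ε (Set.range f)) ∧
      (g.comp ⟨Set.inclusion hAU, continuous_inclusion hAU⟩).Homotopic f := by
  rcases isEmpty_or_nonempty ↥A with hA | hA
  · -- trivial case : `A` is empty
    have hAU : A ⊆ (∅ : Set X) := fun x hx => (hA.false ⟨x, hx⟩).elim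
    have hUe : IsEmpty ↥(∅ : Set X) := by simp
    set g : C(↥(∅ : Set X), K) :=
      ⟨fun x => isEmptyElim x, continuous_iff_continuousAt.2 fun x => isEmptyElim x⟩ with hg
    refine ⟨∅, isOpen_empty, hAU, g, fun u => isEmptyElim u, ?_⟩
    have heq : g.comp ⟨Set.inclusion hAU, continuous_inclusion hAU⟩ = f :=
      ContinuousMap.ext fun a => isEmptyElim a
    rw [heq]
  · -- main case
    have hKne : Nonempty K := ⟨f hA.some⟩
    set x₀ : K := Classical.arbitrary K with hx₀
    set Φ : K → BoundedContinuousFunction K ℝ := phi x₀ with hΦ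
    set Cset : Set (BoundedContinuousFunction K ℝ) := convexHull ℝ (Set.range Φ) with hCset
    have hΦC : ∀ x : K, Φ x ∈ Cset := fun x => subset_convexHull ℝ _ ⟨x, rfl⟩
    set e : K → ↥Cset := fun x => ⟨Φ x, hΦC x⟩ with he
    have hiso : Isometry Φ := phi_isometry x₀
    have heiso : Isometry e := Isometry.of_dist_eq fun x y => by
      rw [Subtype.dist_eq]; exact hiso.dist_eq x y
    have hce : Topology.IsClosedEmbedding e := by
      refine ⟨heiso.isEmbedding, ?_⟩
      refine isClosed_of_closure_subset fun z hz => ?_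
      have happ : ∀ δ > (0:ℝ), ∃ x : K, dist (Φ x) (z : BoundedContinuousFunction K ℝ) < δ := by
        intro δ hδ
        obtain ⟨w, hwmem, hwd⟩ := Metric.mem_closure_iff.1 hz δ hδ
        obtain ⟨x, rfl⟩ := hwmem
        refine ⟨x, ?_⟩
        rw [dist_comm] at hwd
        rw [Subtype.dist_eq] at hwd
        exact hwd
      obtain ⟨x, hx⟩ := mem_range_phi x₀ z.2 happ
      exact ⟨x, Subtype.ext hx⟩
    obtain ⟨V, hVo, hVe, r, hr⟩ := hK.2 ↥Cset e hce
    -- choose radii η around each point of K controlling V-membership and r-displacement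
    have hηex : ∀ p : K, ∃ η > (0:ℝ), (∀ z : ↥Cset, dist z (e p) < η → z ∈ V) ∧
        ∀ w : ↥V, dist (w : ↥Cset) (e p) < η → dist (r w) p < ε := by
      intro p
      obtain ⟨δ₁, hδ₁pos, hδ₁⟩ := Metric.isOpen_iff.1 hVo (e p) (hVe p)
      have hcont : ContinuousAt r ⟨e p, hVe p⟩ := r.continuous.continuousAt
      rw [Metric.continuousAt_iff] at hcont
      obtain ⟨δ₂, hδ₂pos, hδ₂⟩ := hcont ε hε
      refine ⟨min δ₁ δ₂, lt_min hδ₁pos hδ₂pos,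
        fun z hz => hδ₁ (mem_ball.2 (lt_of_lt_of_le hz (min_le_left _ _))), fun w hw => ?_⟩
      have h1 : dist w (⟨e p, hVe p⟩ : ↥V) < δ₂ := by
        rw [Subtype.dist_eq]; exact lt_of_lt_of_le hw (min_le_right _ _)
      have h2 := hδ₂ h1
      rwa [hr p] at h2
    choose η hηpos hηV hηr using fun a : ↥A => hηex (f a)
    -- choose radii ρ of continuity for f
    have hρex : ∀ a : ↥A, ∃ ρ > (0:ℝ),
        ∀ b : ↥A, dist (b : X) (a : X) < ρ → dist (f b) (f a) < η a / 4 := by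
      intro a
      have hc : ContinuousAt f a := f.continuous.continuousAt
      rw [Metric.continuousAt_iff] at hc
      obtain ⟨ρ, hρpos, hρc⟩ := hc (η a / 4) (by linarith [hηpos a])
      exact ⟨ρ, hρpos, fun b hb => hρc (by rwa [Subtype.dist_eq])⟩
    choose ρ hρpos hρ using hρex
    set Uset : Set X := ⋃ a : ↥A, ball (a : X) (ρ a / 8) with hUset
    have hUo : IsOpen Uset := isOpen_iUnion fun a => isOpen_ball
    have hAU : A ⊆ Uset := fun x hx =>
      mem_iUnion.2 ⟨⟨x, hx⟩, mem_ball_self (by linarith [hρpos ⟨x, hx⟩])⟩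
    -- partition of unity on the open set
    set W : ↥A → Set ↥Uset := fun a => Subtype.val ⁻¹' ball (a : X) (ρ a / 8) with hW
    have hWo : ∀ a, IsOpen (W a) := fun a => isOpen_ball.preimage continuous_subtype_val
    have hWcov : (univ : Set ↥Uset) ⊆ ⋃ a, W a := by
      intro x _
      obtain ⟨a, ha⟩ := mem_iUnion.1 x.2
      exact mem_iUnion.2 ⟨a, ha⟩
    obtain ⟨φ, hφ⟩ := PartitionOfUnity.exists_isSubordinate isClosed_univ W hWo hWcov
    set F : ↥Uset → BoundedContinuousFunction K ℝ := fun x => ∑ᶠ a, φ a x • Φ (f a) with hF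
    have hFc : Continuous F := φ.continuous_finsum_smul fun i x _ => continuousAt_const
    have hFC : ∀ x, F x ∈ Cset := fun x =>
      φ.finsum_smul_mem_convex (g := fun i (_ : ↥Uset) => Φ (f i)) (mem_univ x)
        (fun i _ => hΦC (f i)) (convex_convexHull ℝ _)
    -- the key pointwise estimate
    have key : ∀ x : ↥Uset, ∃ j : ↥A, φ j x ≠ 0 ∧ dist (F x) (Φ (f j)) ≤ η j / 4 := by
      intro x
      have hfin : {a : ↥A | φ a x ≠ 0}.Finite := φ.locallyFinite.point_finite x
      have hxsup : ∀ i : ↥A, φ i x ≠ 0 → dist (x : X) (i : X) < ρ i / 8 := by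
        intro i hi
        have h1 : x ∈ tsupport (φ i) := subset_closure hi
        have h2 := hφ i h1
        rwa [hW, mem_preimage, mem_ball] at h2
      have hSne : hfin.toFinset.Nonempty := by
        by_contra hne
        rw [Finset.not_nonempty_iff_eq_empty] at hne
        have hz : ∀ a : ↥A, (fun a : ↥A => φ a x) a = 0 := fun a => by
          by_contra hc
          have h3 : a ∈ hfin.toFinset := hfin.mem_toFinset.2 hc
          simp [hne] at h3
        have h1 := φ.sum_eq_one (mem_univ x)
        rw [finsum_eq_zero_of_forall_eq_zero hz] at h1
        exact zero_ne_one h1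
      obtain ⟨j, hjS, hjmax⟩ := hfin.toFinset.exists_max_image ρ hSne
      have hjne : φ j x ≠ 0 := hfin.mem_toFinset.1 hjS
      have hff : ∀ i : ↥A, φ i x ≠ 0 → dist (f i) (f j) < η j / 4 := by
        intro i hi
        apply hρ j i
        have h1 := hxsup i hi
        have h2 := hxsup j hjne
        have h3 : ρ i ≤ ρ j := hjmax i (hfin.mem_toFinset.2 hi)
        have h4 := dist_triangle (i : X) (x : X) (j : X)
        rw [dist_comm (i : X) (x : X)] at h4
        linarith [hρpos j]
      refine ⟨j, hjne, ?_⟩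
      have hsupp : (Function.support fun a : ↥A => φ a x • Φ (f a)) ⊆ ↑hfin.toFinset := by
        intro a ha
        have h5 : φ a x ≠ 0 := fun h => ha (by simp [h])
        exact hfin.mem_toFinset.2 h5
      have hFx : F x = ∑ i ∈ hfin.toFinset, φ i x • Φ (f i) :=
        finsum_eq_sum_of_support_subset _ hsupp
      have hsum1 : ∑ i ∈ hfin.toFinset, φ i x = 1 := by
        rw [← φ.sum_eq_one (mem_univ x)]
        exact (finsum_eq_sum_of_support_subset _
          (fun a ha => hfin.mem_toFinset.2 ha)).symm
      have hPhij : Φ (f j) = ∑ i ∈ hfin.toFinset, φ i x • Φ (f j) := by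
        rw [← Finset.sum_smul, hsum1, one_smul]
      rw [dist_eq_norm, hFx]
      nth_rewrite 1 [hPhij]
      rw [← Finset.sum_sub_distrib]
      calc ‖∑ i ∈ hfin.toFinset, (φ i x • Φ (f i) - φ i x • Φ (f j))‖
          ≤ ∑ i ∈ hfin.toFinset, ‖φ i x • Φ (f i) - φ i x • Φ (f j)‖ := norm_sum_le _ _
        _ ≤ ∑ i ∈ hfin.toFinset, φ i x * (η j / 4) := by
            refine Finset.sum_le_sum fun i hi => ?_
            have hterm : φ i x • Φ (f i) - φ i x • Φ (f j)
                = φ i x • (Φ (f i) - Φ (f j)) :=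
              (smul_sub (φ i x) (Φ (f i)) (Φ (f j))).symm
            have hnorm : ‖φ i x • (Φ (f i) - Φ (f j))‖ = |φ i x| * ‖Φ (f i) - Φ (f j)‖ := by
              rw [norm_smul (φ i x) (Φ (f i) - Φ (f j)), Real.norm_eq_abs]
            rw [hterm, hnorm, abs_of_nonneg (φ.nonneg i x)]
            refine mul_le_mul_of_nonneg_left ?_ (φ.nonneg i x)
            rw [← dist_eq_norm, hiso.dist_eq]
            exact (hff i (hfin.mem_toFinset.1 hi)).le
        _ = η j / 4 := by rw [← Finset.sum_mul, hsum1, one_mul]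
    choose jx hjx1 hjx2 using key
    have hjdist : ∀ x : ↥Uset, dist (x : X) ((jx x : ↥A) : X) < ρ (jx x) / 8 := by
      intro x
      have h1 : x ∈ tsupport (φ (jx x)) := subset_closure (hjx1 x)
      have h2 := hφ (jx x) h1
      rwa [hW, mem_preimage, mem_ball] at h2
    have hFV : ∀ x : ↥Uset, (⟨F x, hFC x⟩ : ↥Cset) ∈ V := by
      intro x
      apply hηV (jx x)
      rw [Subtype.dist_eq]
      calc dist (F x) (Φ (f (jx x))) ≤ η (jx x) / 4 := hjx2 x
        _ < η (jx x) := by linarith [hηpos (jx x)]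
    set g : C(↥Uset, K) := r.comp ⟨fun x => ⟨⟨F x, hFC x⟩, hFV x⟩,
      Continuous.subtype_mk (Continuous.subtype_mk hFc _) _⟩ with hg
    refine ⟨Uset, hUo, hAU, g, ?_, ?_⟩
    · -- thickening condition
      intro u
      rw [Metric.mem_thickening_iff]
      refine ⟨f (jx u), mem_range_self _, ?_⟩
      apply hηr (jx u)
      rw [Subtype.dist_eq]
      calc dist (F u) (Φ (f (jx u))) ≤ η (jx u) / 4 := hjx2 u
        _ < η (jx u) := by linarith [hηpos (jx u)]
    · -- the homotopy
      set ι' : ↥A → ↥Uset := Set.inclusion hAU with hι'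
      have hmemC : ∀ p : unitInterval × ↥A,
          (1 - (p.1 : ℝ)) • F (ι' p.2) + (p.1 : ℝ) • Φ (f p.2) ∈ Cset := fun p =>
        (convex_convexHull ℝ _) (hFC (ι' p.2)) (hΦC (f p.2))
          (by linarith [p.1.2.2]) p.1.2.1 (by ring)
      have hmemV : ∀ p : unitInterval × ↥A,
          (⟨(1 - (p.1 : ℝ)) • F (ι' p.2) + (p.1 : ℝ) • Φ (f p.2), hmemC p⟩ : ↥Cset) ∈ V := by
        rintro ⟨t, a⟩
        apply hηV (jx (ι' a))
        rw [Subtype.dist_eq]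
        have h1 : dist (F (ι' a)) (Φ (f (jx (ι' a)))) ≤ η (jx (ι' a)) / 4 := hjx2 _
        have h2 : dist (Φ (f a)) (Φ (f (jx (ι' a)))) ≤ η (jx (ι' a)) / 4 := by
          rw [hiso.dist_eq]
          refine (hρ (jx (ι' a)) a ?_).le
          have h3 := hjdist (ι' a)
          have h4 : ((ι' a : ↥Uset) : X) = (a : X) := rfl
          rw [h4] at h3
          linarith [hρpos (jx (ι' a))]
        have hcomb : dist ((1 - (t : ℝ)) • F (ι' a) + (t : ℝ) • Φ (f a))
            (Φ (f (jx (ι' a)))) ≤ η (jx (ι' a)) / 4 := by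
          have hrw : (1 - (t : ℝ)) • F (ι' a) + (t : ℝ) • Φ (f a) - Φ (f (jx (ι' a)))
              = (1 - (t : ℝ)) • (F (ι' a) - Φ (f (jx (ι' a))))
                + (t : ℝ) • (Φ (f a) - Φ (f (jx (ι' a)))) := by
            module
          rw [dist_eq_norm, hrw]
          have ht0 : (0:ℝ) ≤ (t : ℝ) := t.2.1
          have ht1 : (0:ℝ) ≤ 1 - (t : ℝ) := by linarith [t.2.2]
          calc ‖(1 - (t : ℝ)) • (F (ι' a) - Φ (f (jx (ι' a))))
                + (t : ℝ) • (Φ (f a) - Φ (f (jx (ι' a))))‖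
              ≤ ‖(1 - (t : ℝ)) • (F (ι' a) - Φ (f (jx (ι' a))))‖
                + ‖(t : ℝ) • (Φ (f a) - Φ (f (jx (ι' a))))‖ := norm_add_le _ _
            _ = (1 - (t : ℝ)) * dist (F (ι' a)) (Φ (f (jx (ι' a))))
                + (t : ℝ) * dist (Φ (f a)) (Φ (f (jx (ι' a)))) := by
                rw [norm_smul (1 - (t : ℝ)) (F (ι' a) - Φ (f (jx (ι' a)))),
                  norm_smul ((t : ℝ)) (Φ (f a) - Φ (f (jx (ι' a)))),
                  Real.norm_eq_abs, Real.norm_eq_abs,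
                  abs_of_nonneg ht1, abs_of_nonneg ht0, dist_eq_norm, dist_eq_norm]
            _ ≤ (1 - (t : ℝ)) * (η (jx (ι' a)) / 4) + (t : ℝ) * (η (jx (ι' a)) / 4) := by
                gcongr
            _ = η (jx (ι' a)) / 4 := by ring
        calc dist ((1 - (t : ℝ)) • F (ι' a) + (t : ℝ) • Φ (f a)) (Φ (f (jx (ι' a))))
            ≤ η (jx (ι' a)) / 4 := hcomb
          _ < η (jx (ι' a)) := by linarith [hηpos (jx (ι' a))]
      refine ⟨⟨⟨fun p => r ⟨⟨(1 - (p.1 : ℝ)) • F (ι' p.2) + (p.1 : ℝ) • Φ (f p.2),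
          hmemC p⟩, hmemV p⟩, ?_⟩, ?_, ?_⟩⟩
      · refine r.continuous.comp (Continuous.subtype_mk (Continuous.subtype_mk ?_ _) _)
        refine Continuous.add (Continuous.fun_smul ?_ ?_) (Continuous.fun_smul ?_ ?_)
        · exact continuous_const.sub (continuous_subtype_val.comp continuous_fst)
        · exact hFc.comp ((continuous_inclusion hAU).comp continuous_snd)
        · exact continuous_subtype_val.comp continuous_fst
        · exact hiso.continuous.comp (f.continuous.comp continuous_snd)
      · intro a
        have hv : (⟨⟨(1 - ((0 : unitInterval) : ℝ)) • F (ι' a)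
              + ((0 : unitInterval) : ℝ) • Φ (f a), hmemC (0, a)⟩, hmemV (0, a)⟩ : ↥V)
            = ⟨⟨F (ι' a), hFC (ι' a)⟩, hFV (ι' a)⟩ := by
          apply Subtype.ext
          apply Subtype.ext
          show (1 - ((0 : unitInterval) : ℝ)) • F (ι' a)
              + ((0 : unitInterval) : ℝ) • Φ (f a) = F (ι' a)
          simp
        exact congrArg r hv
      · intro a
        have hv : (⟨⟨(1 - ((1 : unitInterval) : ℝ)) • F (ι' a)
              + ((1 : unitInterval) : ℝ) • Φ (f a), hmemC (1, a)⟩, hmemV (1, a)⟩ : ↥V)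
            = ⟨e (f a), hVe (f a)⟩ := by
          apply Subtype.ext
          apply Subtype.ext
          show (1 - ((1 : unitInterval) : ℝ)) • F (ι' a)
              + ((1 : unitInterval) : ℝ) • Φ (f a) = Φ (f a)
          simp
        exact (congrArg r hv).trans (hr (f a))
end

section
/- Let K be a metrizable ANE and y₀ ∈ K. Then the path space PK = {φ : [0,1] → K continuous | φ(1) = y₀}, with the compact-open (sup metric) topology, is also an ANE: for every metric space X, every closed subset A ⊆ X, and every continuous map f : A → PK, the map f extends continuously over some open neighborhood U of A in X. -/
open Set Metric TopologicalSpace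

/-- A metrizable space `K` is an ANE (absolute neighborhood extensor) for metrizable
spaces if every continuous map to `K` from a closed subset of a metrizable space
extends continuously over some open neighborhood of that subset. -/
def IsANE (K : Type u) [TopologicalSpace K] : Prop :=
  MetrizableSpace K ∧
    ∀ (Z : Type u) [MetricSpace Z] (Y : Set Z), IsClosed Y →
      ∀ h : C(Y, K), ∃ (U : Set Z) (_ : IsOpen U) (hYU : Y ⊆ U) (H : C(U, K)),
        ∀ (z : Z) (hz : z ∈ Y), H ⟨z, hYU hz⟩ = h ⟨z, hz⟩

/-- The path space `PK` of paths in `K` ending at `y₀`, with the compact-open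
topology inherited from `C([0,1], K)`. -/
abbrev PathSpace (K : Type*) [TopologicalSpace K] (y₀ : K) :=
  {φ : C(unitInterval, K) // φ 1 = y₀}

/-- Gluing lemma: a map continuous on each of two closed sets is continuous on their union. -/
lemma continuousOn_union_of_isClosed' {X Y : Type*} [TopologicalSpace X] [TopologicalSpace Y]
    {s t : Set X} {f : X → Y} (hs : IsClosed s) (ht : IsClosed t)
    (hfs : ContinuousOn f s) (hft : ContinuousOn f t) : ContinuousOn f (s ∪ t) := by
  intro z hz
  by_cases hzs : z ∈ s <;> by_cases hzt : z ∈ t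
  · exact (hfs z hzs).union (hft z hzt)
  · exact (hfs z hzs).union
      (continuousWithinAt_of_notMem_closure (by rwa [ht.closure_eq]))
  · exact (continuousWithinAt_of_notMem_closure (by rwa [hs.closure_eq])).union (hft z hzt)
  · cases hz <;> contradiction

/-- If `K` is a metrizable ANE and `y₀ ∈ K`, then the path space `PK`
is also an ANE: every continuous map from a closed subset `A` of a metric space `X`
into `PK` extends continuously over some open neighborhood `U` of `A` in `X`. -/
theorem pathSpace_isANE (K : Type u) [TopologicalSpace K] [MetrizableSpace K]
    (hK : IsANE K) (y₀ : K)
    (X : Type u) [MetricSpace X] (A : Set X) (hA : IsClosed A)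
    (f : C(A, PathSpace K y₀)) :
    ∃ (U : Set X) (_ : IsOpen U) (hAU : A ⊆ U) (F : C(U, PathSpace K y₀)),
      ∀ (x : X) (hx : x ∈ A), F ⟨x, hAU hx⟩ = f ⟨x, hx⟩ := by
  classical
  -- Work in Z = X × [0,1]
  set C₁ : Set (X × unitInterval) := A ×ˢ (univ : Set unitInterval) with hC₁def
  set C₂ : Set (X × unitInterval) := (univ : Set X) ×ˢ ({1} : Set unitInterval) with hC₂def
  set Y : Set (X × unitInterval) := C₁ ∪ C₂ with hYdef
  have hC₁cl : IsClosed C₁ := hA.prod isClosed_univ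
  have hC₂cl : IsClosed C₂ := isClosed_univ.prod isClosed_singleton
  have hYcl : IsClosed Y := hC₁cl.union hC₂cl
  -- the map to extend, uncurried
  set g : X × unitInterval → K :=
    fun z => if hx : z.1 ∈ A then (f ⟨z.1, hx⟩ : PathSpace K y₀).1 z.2 else y₀ with hgdef
  have hg1 : ∀ (z : X × unitInterval) (hz : z.1 ∈ A),
      g z = (f ⟨z.1, hz⟩ : PathSpace K y₀).1 z.2 := fun z hz => dif_pos hz
  have hg2 : ∀ z : X × unitInterval, z.2 = 1 → g z = y₀ := by
    intro z hz
    by_cases hx : z.1 ∈ A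
    · rw [hg1 z hx, hz, (f ⟨z.1, hx⟩ : PathSpace K y₀).2]
    · exact dif_neg hx
  have hgC₁ : ContinuousOn g C₁ := by
    rw [continuousOn_iff_continuous_restrict]
    have heq : C₁.restrict g
        = fun z : C₁ => (f ⟨z.1.1, z.2.1⟩ : PathSpace K y₀).1 z.1.2 := by
      funext z; exact hg1 z.1 z.2.1
    rw [show C₁.domRestrict g = _ from heq]
    have hc : Continuous fun z : C₁ =>
        ((f ⟨z.1.1, z.2.1⟩ : PathSpace K y₀) : C(unitInterval, K)) :=
      continuous_subtype_val.comp (f.continuous.comp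
        (Continuous.subtype_mk (continuous_fst.comp continuous_subtype_val) _))
    exact continuous_eval.comp
      (hc.prodMk (continuous_snd.comp continuous_subtype_val))
  have hgC₂ : ContinuousOn g C₂ := by
    rw [continuousOn_iff_continuous_restrict]
    have heq : C₂.restrict g = fun _ => y₀ := funext fun z => hg2 z.1 z.2.2
    rw [show C₂.domRestrict g = _ from heq]; exact continuous_const
  have hgY : Continuous (Y.restrict g) :=
    continuousOn_iff_continuous_restrict.mp
      (continuousOn_union_of_isClosed' hC₁cl hC₂cl hgC₁ hgC₂)
  obtain ⟨W, hWopen, hYW, H, hH⟩ := hK.2 (X × unitInterval) Y hYcl ⟨Y.restrict g, hgY⟩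
  -- tube lemma around each point of A
  have htube : ∀ a ∈ A, ∃ u : Set X, IsOpen u ∧ a ∈ u ∧ u ×ˢ (univ : Set unitInterval) ⊆ W := by
    intro a ha
    have hsub : ({a} : Set X) ×ˢ (univ : Set unitInterval) ⊆ W := by
      intro z hz
      exact hYW (Or.inl ⟨by rw [hz.1]; exact ha, trivial⟩)
    obtain ⟨u, v, huo, hvo, hau, huv, hsub'⟩ :=
      generalized_tube_lemma isCompact_singleton isCompact_univ hWopen hsub
    exact ⟨u, huo, hau rfl, fun z hz => hsub' ⟨hz.1, huv trivial⟩⟩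
  choose! u hu using htube
  refine ⟨⋃ a ∈ A, u a, isOpen_biUnion fun a ha => (hu a ha).1,
    fun a ha => mem_biUnion ha (hu a ha).2.1, ?_⟩
  set U : Set X := ⋃ a ∈ A, u a with hUdef
  have hUW : ∀ x ∈ U, ∀ t : unitInterval, (x, t) ∈ W := by
    intro x hx t
    obtain ⟨a, ha, hxa⟩ := mem_iUnion₂.mp hx
    exact (hu a ha).2.2 ⟨hxa, trivial⟩
  have hmemY1 : ∀ x : X, ((x, (1 : unitInterval)) : X × unitInterval) ∈ Y :=
    fun x => Or.inr ⟨trivial, rfl⟩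
  -- define the extension
  have huncurry : Continuous fun z : U × unitInterval =>
      H ⟨(z.1.1, z.2), hUW z.1.1 z.1.2 z.2⟩ :=
    H.continuous.comp (Continuous.subtype_mk
      ((continuous_subtype_val.comp continuous_fst).prodMk continuous_snd) _)
  set Fc : U → C(unitInterval, K) := fun x =>
    ⟨fun t => H ⟨(x.1, t), hUW x.1 x.2 t⟩,
      H.continuous.comp (Continuous.subtype_mk
        ((continuous_const.prodMk continuous_id).comp continuous_id) _)⟩ with hFcdef
  have hFc : Continuous Fc := ContinuousMap.continuous_of_continuous_uncurry Fc huncurry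
  have hFend : ∀ x : U, Fc x 1 = y₀ := by
    intro x
    have h1 := hH (x.1, (1 : unitInterval)) (hmemY1 x.1)
    calc Fc x 1 = H ⟨(x.1, 1), hYW (hmemY1 x.1)⟩ := rfl
      _ = g (x.1, 1) := h1
      _ = y₀ := hg2 _ rfl
  refine ⟨⟨fun x => ⟨Fc x, hFend x⟩, Continuous.subtype_mk hFc _⟩, ?_⟩
  intro x hx
  apply Subtype.ext
  apply ContinuousMap.ext
  intro t
  have hmem : ((x, t) : X × unitInterval) ∈ Y := Or.inl ⟨hx, trivial⟩
  have h1 := hH (x, t) hmem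
  calc (Fc ⟨x, _⟩) t = H ⟨(x, t), hYW hmem⟩ := rfl
    _ = g (x, t) := h1
    _ = (f ⟨x, hx⟩ : PathSpace K y₀).1 t := hg1 (x, t) hx
end

section
/- Let X be a compact metric ANR and let A ⊆ X be a subset that is contractible in X. Then there exists an open set U ⊆ X with A ⊆ U such that U is contractible in X. -/
open Set Metric TopologicalSpace

/-- The inclusion of a subset of `X` into `X`, as a continuous map. -/
def ContinuousMap.setInclusion {X : Type*} [TopologicalSpace X] (A : Set X) : C(A, X) :=
  ⟨Subtype.val, continuous_subtype_val⟩

/-- A subset `A ⊆ X` is *contractible in `X`* if the inclusion map `A → X`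
is homotopic to a constant map. -/
def ContractibleIn {X : Type*} [TopologicalSpace X] (A : Set X) : Prop :=
  (ContinuousMap.setInclusion A).Nullhomotopic

/-- Let `X` be a compact metric ANR and `A ⊆ X` contractible in `X`.
Then some open set `U ⊇ A` is contractible in `X`. -/
theorem exists_open_contractible_superset (X : Type u) [MetricSpace X] [CompactSpace X]
    (hX : IsANR X) (A : Set X) (hA : ContractibleIn A) :
    ∃ U : Set X, IsOpen U ∧ A ⊆ U ∧ ContractibleIn U := by
  classical
  obtain ⟨c, hc⟩ := hA
  rcases A.eq_empty_or_nonempty with rfl | hAne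
  · exact ⟨∅, isOpen_empty, subset_rfl, ⟨c, hc⟩⟩
  obtain ⟨H⟩ := hc
  -- the ambient normed space: a universe-`u` copy of `ℓ^∞(ℕ)`
  let E := ULift.{u} ↥(lp (fun _ : ℕ => ℝ) (⊤ : ENNReal))
  let κ : X → E := fun x => ULift.up (kuratowskiEmbedding X x)
  have hκ : Isometry κ := by
    intro p q
    exact kuratowskiEmbedding.isometry X p q
  obtain ⟨U, hUo, hUm, r, hr⟩ := hX.2 E κ hκ.isClosedEmbedding
  obtain ⟨δ, hδ, hδU⟩ := (isCompact_range hκ.continuous).exists_thickening_subset_open hUo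
    (range_subset_iff.2 hUm)
  set ε := δ / 3 with hε_def
  have hε : 0 < ε := by positivity
  -- the curried path map: `a ↦ (s ↦ H (s, a))`
  let Φ : C(↥A, C(unitInterval, X)) :=
    (H.toContinuousMap.comp ⟨Prod.swap, continuous_swap⟩).curry
  have hΦ0 : ∀ a : ↥A, Φ a 0 = (a : X) := fun a => H.apply_zero a
  have hΦ1 : ∀ a : ↥A, Φ a 1 = c := fun a => H.apply_one a
  -- local moduli of continuity for Φ
  have hΦc := Metric.continuous_iff.mp Φ.continuous
  choose δa hδa_pos hδa using fun a : ↥A => hΦc a ε hε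
  -- radii
  set ρ : ↥A → ℝ := fun a => min (δa a) ε / 2 with hρ_def
  have hρ_pos : ∀ a, 0 < ρ a := fun a => by
    have := hδa_pos a; have := hε; dsimp only [ρ]; positivity
  have hρ_le_ε : ∀ a, ρ a ≤ ε / 2 := fun a => by
    have := min_le_right (δa a) ε; dsimp only [ρ]; linarith
  have hρ_le_δa : ∀ a, ρ a ≤ δa a / 2 := fun a => by
    have := min_le_left (δa a) ε; dsimp only [ρ]; linarith
  -- the open set V
  set V : Set X := ⋃ a : ↥A, ball (a : X) (ρ a) with hV_def
  have hVo : IsOpen V := isOpen_iUnion fun a => isOpen_ball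
  have hAV : A ⊆ V := fun x hx => mem_iUnion.2 ⟨⟨x, hx⟩, mem_ball_self (hρ_pos _)⟩
  -- partition of unity on V subordinate to the balls
  obtain ⟨φ, hφ⟩ := PartitionOfUnity.exists_isSubordinate (ι := ↥A) (X := ↥V)
    isClosed_univ (fun a => Subtype.val ⁻¹' ball (a : X) (ρ a))
    (fun a => isOpen_ball.preimage continuous_subtype_val)
    (fun x _ => by
      obtain ⟨a, ha⟩ := mem_iUnion.1 x.2
      exact mem_iUnion.2 ⟨a, ha⟩)
  have hφ_ball : ∀ (a : ↥A) (x : ↥V), φ a x ≠ 0 → dist (x : X) (a : X) < ρ a := by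
    intro a x hax
    have := hφ a (subset_tsupport _ hax)
    exact mem_ball.1 this
  -- finite support at a point
  have hsupp_fin : ∀ x : ↥V, (Function.support fun a : ↥A => φ a x).Finite := fun x =>
    (φ.locallyFinite.point_finite x).subset fun a ha => ha
  let T : ↥V → Finset ↥A := fun x => (hsupp_fin x).toFinset
  have hT_mem : ∀ (x : ↥V) (a : ↥A), a ∈ T x ↔ φ a x ≠ 0 := fun x a =>
    (hsupp_fin x).mem_toFinset
  have hsum1 : ∀ x : ↥V, ∑ a ∈ T x, φ a x = 1 := by
    intro x
    rw [← finsum_eq_sum_of_support_subset _ (fun a ha => by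
      rwa [Finset.mem_coe, (hsupp_fin x).mem_toFinset])]
    exact φ.sum_eq_one (mem_univ x)
  -- selection of index with maximal radius
  have key : ∀ x : ↥V, ∃ a₀ : ↥A, φ a₀ x ≠ 0 ∧
      ∀ a : ↥A, φ a x ≠ 0 → ρ a ≤ ρ a₀ := by
    intro x
    have hne : (Function.support fun a : ↥A => φ a x).Nonempty := by
      rw [Function.support_nonempty_iff]
      intro h0
      have h1 := φ.sum_eq_one (mem_univ x)
      have h2 : ∀ a : ↥A, φ a x = (0 : ℝ) := fun a => congrFun h0 a
      rw [finsum_congr h2, finsum_zero] at h1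
      norm_num at h1
    obtain ⟨a₀, ha₀, hmax⟩ := Set.exists_max_image _ ρ (hsupp_fin x) hne
    exact ⟨a₀, ha₀, fun a ha => hmax a ha⟩
  choose a₀ ha₀ hmax using key
  -- comparability of paths with the maximal one
  have hpath : ∀ (x : ↥V) (a : ↥A), φ a x ≠ 0 → ∀ s : unitInterval,
      dist (Φ a s) (Φ (a₀ x) s) < ε := by
    intro x a ha s
    have hd : dist a (a₀ x) < δa (a₀ x) := by
      rw [Subtype.dist_eq]
      calc dist (a : X) (a₀ x : X) ≤ dist (a : X) (x : X) + dist (x : X) (a₀ x : X) :=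
            dist_triangle _ _ _
        _ < ρ a + ρ (a₀ x) := by
            have h1 := hφ_ball a x ha
            have h2 := hφ_ball (a₀ x) x (ha₀ x)
            rw [dist_comm] at h1
            exact add_lt_add h1 h2
        _ ≤ ρ (a₀ x) + ρ (a₀ x) := by
            have := hmax x a ha; linarith
        _ ≤ δa (a₀ x) := by have := hρ_le_δa (a₀ x); linarith
    exact lt_of_le_of_lt (ContinuousMap.dist_apply_le_dist s) (hδa (a₀ x) a hd)
  -- the convex-combination path
  set P : ↥V → unitInterval → E := fun x s => ∑ᶠ a : ↥A, φ a x • κ (Φ a s) with hP_def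
  have hP_sum : ∀ x s, P x s = ∑ a ∈ T x, φ a x • κ (Φ a s) := by
    intro x s
    refine finsum_eq_sum_of_support_subset _ fun a ha => ?_
    rw [Function.mem_support] at ha
    rw [Finset.mem_coe, hT_mem]
    intro h0
    exact ha (by rw [h0, zero_smul])
  have hP_close : ∀ (x : ↥V) (s : unitInterval), dist (P x s) (κ (Φ (a₀ x) s)) ≤ ε := by
    intro x s
    have : P x s ∈ closedBall (κ (Φ (a₀ x) s)) ε := by
      rw [hP_sum]
      refine (convex_closedBall _ _).sum_mem (fun a _ => φ.nonneg a x) (hsum1 x) ?_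
      intro a ha
      rw [mem_closedBall]
      have := hpath x a ((hT_mem x a).1 ha) s
      rw [hκ.dist_eq]
      exact this.le
    exact mem_closedBall.1 this
  have hP_one : ∀ x : ↥V, P x 1 = κ c := by
    intro x
    rw [hP_sum]
    have : ∀ a ∈ T x, φ a x • κ (Φ a 1) = φ a x • κ c := fun a _ => by rw [hΦ1]
    rw [Finset.sum_congr rfl this, ← Finset.sum_smul, hsum1, one_smul]
  -- reparametrizations
  set uu : unitInterval → ℝ := fun t => min (2 * (t : ℝ)) 1 with huu_def
  set vv : unitInterval → unitInterval := fun t => projIcc 0 1 zero_le_one (2 * (t : ℝ) - 1)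
    with hvv_def
  have huu_mem : ∀ t, uu t ∈ Icc (0:ℝ) 1 := fun t =>
    ⟨le_min (by have := t.2.1; positivity) zero_le_one, min_le_right _ _⟩
  have huu0 : uu 0 = 0 := by simp [huu_def]
  have huu1 : uu 1 = 1 := by simp [huu_def]
  have hvv1 : vv 1 = 1 := by
    apply Subtype.ext
    rw [hvv_def]
    simp [Set.coe_projIcc]
    norm_num
  -- the homotopy in E
  set F : unitInterval × ↥V → E := fun p =>
    (1 - uu p.1) • κ (p.2 : X) + uu p.1 • P p.2 (vv p.1) with hF_def
  -- F lands in U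
  have hFU : ∀ p : unitInterval × ↥V, F p ∈ U := by
    rintro ⟨t, x⟩
    apply hδU
    rw [Metric.mem_thickening_iff]
    rcases le_or_gt (t : ℝ) (1/2) with ht | ht
    · -- first half: near κ x
      refine ⟨κ (x : X), mem_range_self _, ?_⟩
      have hvv0 : vv t = 0 := by
        apply Subtype.ext
        rw [hvv_def]
        simp only [Set.coe_projIcc]
        have : 2 * (t:ℝ) - 1 ≤ 0 := by linarith
        simp [min_eq_right (by linarith : 2 * (t:ℝ) - 1 ≤ (1:ℝ)), max_eq_left this]
      have hd : dist (P x (vv t)) (κ (x : X)) ≤ ε + ε := by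
        calc dist (P x (vv t)) (κ (x : X))
            ≤ dist (P x (vv t)) (κ (Φ (a₀ x) (vv t))) + dist (κ (Φ (a₀ x) (vv t))) (κ (x : X)) :=
              dist_triangle _ _ _
          _ ≤ ε + ε := by
              refine add_le_add (hP_close x _) ?_
              rw [hvv0, hΦ0, hκ.dist_eq, dist_comm]
              have := hφ_ball (a₀ x) x (ha₀ x)
              have := hρ_le_ε (a₀ x)
              linarith
      have : F (t, x) - κ (x : X) = uu t • (P x (vv t) - κ (x : X)) := by
        rw [hF_def]
        simp only
        rw [smul_sub, sub_smul, one_smul]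
        abel
      rw [dist_eq_norm, this, norm_smul]
      have h1 : ‖uu t‖ ≤ 1 := by
        rw [Real.norm_eq_abs, abs_le]
        exact ⟨by linarith [(huu_mem t).1], (huu_mem t).2⟩
      calc ‖uu t‖ * ‖P x (vv t) - κ (x : X)‖ ≤ 1 * (ε + ε) := by
            refine mul_le_mul h1 ?_ (norm_nonneg _) zero_le_one
            rw [← dist_eq_norm]; exact hd
        _ < δ := by rw [one_mul, hε_def]; linarith
    · -- second half: near κ (Φ (a₀ x) (vv t))
      refine ⟨κ (Φ (a₀ x) (vv t)), mem_range_self _, ?_⟩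
      have huut : uu t = 1 := by
        rw [huu_def]
        exact min_eq_right (by linarith)
      have : F (t, x) = P x (vv t) := by
        rw [hF_def]
        simp only [huut, sub_self, zero_smul, one_smul, zero_add]
      rw [this]
      calc dist (P x (vv t)) (κ (Φ (a₀ x) (vv t))) ≤ ε := hP_close x _
        _ < δ := by rw [hε_def]; linarith
  -- continuity of F
  have hvv_cont : Continuous vv := by
    rw [hvv_def]
    exact continuous_projIcc.comp ((continuous_const.mul continuous_subtype_val).sub
      continuous_const)
  have huu_cont : Continuous uu := by
    rw [huu_def]
    exact (continuous_const.mul continuous_subtype_val).min continuous_const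
  have hP_cont : Continuous fun p : unitInterval × ↥V => P p.2 (vv p.1) := by
    simp only [hP_def]
    refine continuous_finsum (fun a => ?_) ?_
    · exact ((φ a).continuous.comp continuous_snd).smul
        (hκ.continuous.comp ((Φ a).continuous.comp (hvv_cont.comp continuous_fst)))
    · intro p
      obtain ⟨N, hN, hNfin⟩ := φ.locallyFinite p.2
      refine ⟨univ ×ˢ N, prod_mem_nhds Filter.univ_mem hN, ?_⟩
      refine hNfin.subset fun a ha => ?_
      obtain ⟨q, hq1, hq2⟩ := ha
      rw [Function.mem_support] at hq1
      refine ⟨q.2, ?_, hq2.2⟩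
      rw [Function.mem_support]
      intro h0
      exact hq1 (by rw [h0, zero_smul])
  have hF_cont : Continuous F := by
    rw [hF_def]
    exact ((continuous_const.sub (huu_cont.comp continuous_fst)).smul
      (hκ.continuous.comp (continuous_subtype_val.comp continuous_snd))).add
      ((huu_cont.comp continuous_fst).smul hP_cont)
  -- conclude
  refine ⟨V, hVo, hAV, c, ⟨⟨⟨fun p => r ⟨F p, hFU p⟩, ?_⟩, ?_, ?_⟩⟩⟩
  · exact r.continuous.comp (hF_cont.subtype_mk _)
  · intro x
    have hF0 : F (0, x) = κ (x : X) := by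
      rw [hF_def]
      simp only [huu0, sub_zero, one_smul, zero_smul, add_zero]
    have : (⟨F (0, x), hFU (0, x)⟩ : U) = ⟨κ (x : X), hUm (x : X)⟩ := Subtype.ext hF0
    show r ⟨F (0, x), hFU (0, x)⟩ = ContinuousMap.setInclusion V x
    rw [this, hr]
    rfl
  · intro x
    have hF1 : F (1, x) = κ c := by
      rw [hF_def]
      simp only [huu1, sub_self, zero_smul, one_smul, zero_add, hvv1, hP_one]
    have : (⟨F (1, x), hFU (1, x)⟩ : U) = ⟨κ c, hUm c⟩ := Subtype.ext hF1
    show r ⟨F (1, x), hFU (1, x)⟩ = ContinuousMap.const (↥V) c x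
    rw [this, hr]
    rfl
end

section
/- For a compact metric ANR X, the general LS-category equals the Lusternik–Schnirelmann category: cat_g X = cat X. -/
open Set Metric TopologicalSpace

/-- The general Lusternik–Schnirelmann category `cat_g X`: the smallest `k` such that
`X` is the union of `k+1` arbitrary subsets, each contractible in `X` (`⊤` if no such
`k` exists). -/
noncomputable def catg (X : Type*) [TopologicalSpace X] : ℕ∞ :=
  sInf {N : ℕ∞ | ∃ k : ℕ, N = k ∧ ∃ A : Fin (k + 1) → Set X,
    (⋃ i, A i) = Set.univ ∧ ∀ i, ContractibleIn (A i)}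

/-- The (classical) Lusternik–Schnirelmann category `cat X`: the smallest `k` such that
`X` is the union of `k+1` *open* subsets, each contractible in `X`. -/
noncomputable def lsCat (X : Type*) [TopologicalSpace X] : ℕ∞ :=
  sInf {N : ℕ∞ | ∃ k : ℕ, N = k ∧ ∃ A : Fin (k + 1) → Set X,
    (∀ i, IsOpen (A i)) ∧ (⋃ i, A i) = Set.univ ∧ ∀ i, ContractibleIn (A i)}

universe u

open unitInterval

noncomputable def kur (X : Type u) [MetricSpace X] [CompactSpace X] :
    X → BoundedContinuousFunction X ℝ := fun x =>
  BoundedContinuousFunction.mkOfCompact ⟨fun y => dist x y, continuous_const.dist continuous_id⟩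

lemma kur_isometry (X : Type u) [MetricSpace X] [CompactSpace X] : Isometry (kur X) := by
  apply Isometry.of_dist_eq
  intro x x'
  apply le_antisymm
  · refine (BoundedContinuousFunction.dist_le dist_nonneg).2 fun y => ?_
    simpa [kur, Real.dist_eq] using abs_dist_sub_le x x' y
  · calc dist x x' = dist ((kur X x) x') ((kur X x') x') := by
          simp [kur, Real.dist_eq, abs_of_nonneg dist_nonneg]
    _ ≤ dist (kur X x) (kur X x') := BoundedContinuousFunction.dist_coe_le_dist x'

lemma exists_open_contr {X : Type u} [MetricSpace X] [CompactSpace X]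
    (hX : IsANR X) {A : Set X} (hA : ContractibleIn A) :
    ∃ U : Set X, IsOpen U ∧ A ⊆ U ∧ ContractibleIn U := by
  classical
  have hA' : (ContinuousMap.setInclusion A).Nullhomotopic := hA
  obtain ⟨y, hy⟩ := hA'
  obtain ⟨F⟩ := hy
  set ι := kur X with hιdef
  have hiso : Isometry ι := kur_isometry X
  obtain ⟨W, hWopen, hmemW, r, hr⟩ :=
    hX.2 (BoundedContinuousFunction X ℝ) ι hiso.isClosedEmbedding
  obtain ⟨δ, hδpos, hδ⟩ := (isCompact_range hiso.continuous).exists_thickening_subset_open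
    hWopen (range_subset_iff.2 hmemW)
  set η := δ / 4 with hηdef
  have hηpos : 0 < η := by positivity
  set Φ : C(↥A, C(I, X)) := ContinuousMap.curry (F.toContinuousMap.comp ⟨Prod.swap, continuous_swap⟩) with hΦ
  have hΦapp : ∀ (a : ↥A) (t : I), Φ a t = F (t, a) := fun a t => rfl
  have hchoose : ∀ a : ↥A, ∃ ρ : ℝ, 0 < ρ ∧ ρ ≤ η ∧
      ∀ b : ↥A, dist b a < ρ → dist (Φ b) (Φ a) ≤ η := by
    intro a
    obtain ⟨ρ, hρpos, hρ⟩ := Metric.continuous_iff.1 Φ.continuous a η hηpos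
    exact ⟨min ρ η, lt_min hρpos hηpos, min_le_right _ _,
      fun b hb => (hρ b (lt_of_lt_of_le hb (min_le_left _ _))).le⟩
  choose ρ hρpos hρle hρ using hchoose
  set U : Set X := ⋃ a : ↥A, ball (a : X) (ρ a / 8) with hU
  have hUopen : IsOpen U := isOpen_iUnion fun a => isOpen_ball
  have hAU : A ⊆ U := fun x hx => mem_iUnion.2 ⟨⟨x, hx⟩, by
    simp only [mem_ball, dist_self]; exact div_pos (hρpos ⟨x, hx⟩) (by norm_num)⟩
  -- partition of unity on the open set U
  set V : ↥A → Set ↥U := fun a => (fun u : ↥U => (u : X)) ⁻¹' ball (a : X) (ρ a / 8) with hV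
  have hVopen : ∀ a, IsOpen (V a) := fun a => isOpen_ball.preimage continuous_subtype_val
  have hVcover : (univ : Set ↥U) ⊆ ⋃ a, V a := by
    intro u _
    obtain ⟨a, ha⟩ := mem_iUnion.1 u.2
    exact mem_iUnion.2 ⟨a, ha⟩
  obtain ⟨p, hp⟩ := PartitionOfUnity.exists_isSubordinate isClosed_univ V hVopen hVcover
  set γ : ↥A → I → BoundedContinuousFunction X ℝ := fun a t => ι (F (t, a)) with hγ
  have hγcont : ∀ a, Continuous (γ a) :=
    fun a => hiso.continuous.comp (F.continuous.comp (Continuous.prodMk_left a))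
  set g : ↥U × I → BoundedContinuousFunction X ℝ :=
    fun z => ∑ᶠ a, p a z.1 • γ a z.2 with hg
  have hgcont : Continuous g := by
    apply continuous_finsum
    · intro a
      exact (((p a).continuous.comp continuous_fst).smul ((hγcont a).comp continuous_snd))
    · intro z
      obtain ⟨N, hN, hNfin⟩ := p.locallyFinite z.1
      refine ⟨N ×ˢ (univ : Set I), prod_mem_nhds hN Filter.univ_mem, hNfin.subset ?_⟩
      rintro a ⟨w, hw1, hw2⟩
      refine ⟨w.1, ?_, hw2.1⟩
      intro h
      exact hw1 (by simp [h])
  -- pointwise facts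
  have key : ∀ x : ↥U, ∃ a₀ : ↥A, p a₀ x ≠ 0 := by
    intro x
    by_contra h
    push_neg at h
    have h1 : ∑ᶠ a, p a x = 1 := p.sum_eq_one (mem_univ x)
    rw [finsum_eq_zero_of_forall_eq_zero h] at h1
    exact zero_ne_one h1
  have hsupp : ∀ (x : ↥U) (a : ↥A), p a x ≠ 0 → dist (x : X) (a : X) < ρ a / 8 := by
    intro x a h
    have hx : x ∈ V a := hp a (subset_tsupport _ h)
    simpa [hV, mem_ball] using hx
  have hpair : ∀ (x : ↥U) (a b : ↥A), p a x ≠ 0 → p b x ≠ 0 → ∀ t : I,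
      dist (γ a t) (γ b t) ≤ η := by
    intro x a b ha hb t
    have key2 : ∀ (c d : ↥A), ρ d ≤ ρ c → dist (x : X) (c : X) < ρ c / 8 →
        dist (x : X) (d : X) < ρ d / 8 → dist (γ c t) (γ d t) ≤ η := by
      intro c d hcd h1 h2
      have hdc : dist (d : ↥A) c < ρ c := by
        rw [Subtype.dist_eq]
        have hpc := hρpos c
        calc dist (d : X) (c : X) ≤ dist (d : X) (x : X) + dist (x : X) (c : X) :=
              dist_triangle _ _ _
        _ < ρ d / 8 + ρ c / 8 := by rw [dist_comm]; exact add_lt_add h2 h1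
        _ < ρ c := by linarith [hρpos d]
      have hΦdist := hρ c d hdc
      have happ := ContinuousMap.dist_apply_le_dist (f := Φ d) (g := Φ c) t
      have : dist (γ c t) (γ d t) = dist (Φ c t) (Φ d t) := by
        rw [hγ]; rw [hiso.dist_eq]; rfl
      rw [this, dist_comm]
      exact le_trans happ hΦdist
    rcases le_total (ρ a) (ρ b) with h | h
    · rw [dist_comm]
      exact key2 b a h (hsupp x b hb) (hsupp x a ha)
    · exact key2 a b h (hsupp x a ha) (hsupp x b hb)
  -- finsum to finset sum
  have hTfacts : ∀ x : ↥U, ∃ T : Finset ↥A,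
      (∀ t : I, g (x, t) = ∑ a ∈ T, p a x • γ a t) ∧ (∑ a ∈ T, p a x = 1) := by
    intro x
    refine ⟨(p.locallyFinite.point_finite x).toFinset, fun t => ?_, ?_⟩
    · refine finsum_eq_finset_sum_of_support_subset _ ?_
      intro a ha
      have hpa : p a x ≠ 0 := by
        intro h
        exact ha (by simp [h])
      simpa [Set.Finite.mem_toFinset] using hpa
    · rw [← finsum_eq_finset_sum_of_support_subset (fun a => p a x) ?_]
      · exact p.sum_eq_one (mem_univ x)
      · intro a ha
        simpa [Set.Finite.mem_toFinset] using ha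
  have hest : ∀ (x : ↥U) (t : I) (a₀ : ↥A), p a₀ x ≠ 0 → dist (g (x, t)) (γ a₀ t) ≤ η := by
    intro x t a₀ h₀
    obtain ⟨T, hT1, hT2⟩ := hTfacts x
    rw [hT1 t, dist_eq_norm]
    have hrw : (∑ a ∈ T, p a x • γ a t) - γ a₀ t = ∑ a ∈ T, p a x • (γ a t - γ a₀ t) := by
      simp only [smul_sub, Finset.sum_sub_distrib, ← Finset.sum_smul, hT2, one_smul]
    rw [hrw]
    calc ‖∑ a ∈ T, p a x • (γ a t - γ a₀ t)‖ ≤ ∑ a ∈ T, ‖p a x • (γ a t - γ a₀ t)‖ :=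
          norm_sum_le _ _
    _ ≤ ∑ a ∈ T, p a x * η := by
        apply Finset.sum_le_sum
        intro a _
        have hns := norm_smul (p a x) (γ a t - γ a₀ t)
        rw [hns, Real.norm_eq_abs, abs_of_nonneg (p.nonneg a x)]
        by_cases hpa : p a x = 0
        · simp [hpa]
        · refine mul_le_mul_of_nonneg_left ?_ (p.nonneg a x)
          rw [← dist_eq_norm]
          exact hpair x a a₀ hpa h₀ t
    _ = η := by rw [← Finset.sum_mul, hT2, one_mul]
  have hηδ : η < δ := by rw [hηdef]; linarith
  have gmem : ∀ z : ↥U × I, g z ∈ W := by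
    rintro ⟨x, t⟩
    obtain ⟨a₀, h₀⟩ := key x
    exact hδ (mem_thickening_iff.2 ⟨γ a₀ t, mem_range_self _,
      lt_of_le_of_lt (hest x t a₀ h₀) hηδ⟩)
  have hg0 : ∀ x : ↥U, dist (g (x, 0)) (ι (x : X)) < 2 * η := by
    intro x
    obtain ⟨a₀, h₀⟩ := key x
    have h1 := hest x 0 a₀ h₀
    have h2 : γ a₀ 0 = ι (a₀ : X) := by
      rw [hγ]
      simp only []
      congr 1
      exact F.apply_zero a₀
    have h3 : dist (γ a₀ 0) (ι (x : X)) < ρ a₀ / 8 := by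
      rw [h2, hiso.dist_eq, dist_comm]
      exact hsupp x a₀ h₀
    have h4 := hρle a₀
    have h5 := hρpos a₀
    calc dist (g (x, 0)) (ι (x : X)) ≤ dist (g (x, 0)) (γ a₀ 0) + dist (γ a₀ 0) (ι (x : X)) :=
          dist_triangle _ _ _
    _ < η + ρ a₀ / 8 := by linarith
    _ ≤ 2 * η := by linarith
  have hseg : ∀ (x : ↥U) (s : I), (1 - (s : ℝ)) • ι (x : X) + (s : ℝ) • g (x, 0) ∈ W := by
    intro x s
    apply hδ
    refine mem_thickening_iff.2 ⟨ι (x : X), mem_range_self _, ?_⟩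
    have hc : (1 - (s : ℝ)) • ι (x : X) + (s : ℝ) • g (x, 0) - ι (x : X)
        = (s : ℝ) • (g (x, 0) - ι (x : X)) := by module
    have hns := norm_smul (s : ℝ) (g (x, 0) - ι (x : X))
    rw [dist_eq_norm, hc, hns, Real.norm_eq_abs, abs_of_nonneg s.2.1]
    have h1 : ‖g (x, 0) - ι (x : X)‖ < 2 * η := by rw [← dist_eq_norm]; exact hg0 x
    have h2 : (s : ℝ) ≤ 1 := s.2.2
    have h3 : (0:ℝ) ≤ (s : ℝ) := s.2.1
    have h4 := norm_nonneg (g (x, 0) - ι (x : X))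
    have hδ2 : 2 * η < δ := by rw [hηdef]; linarith
    nlinarith
  have hgy : ∀ x : ↥U, g (x, 1) = ι y := by
    intro x
    obtain ⟨T, hT1, hT2⟩ := hTfacts x
    rw [hT1 1]
    have : ∀ a ∈ T, p a x • γ a 1 = p a x • ι y := by
      intro a _
      congr 1
      rw [hγ]
      simp only []
      congr 1
      exact F.apply_one a
    rw [Finset.sum_congr rfl this, ← Finset.sum_smul, hT2, one_smul]
  -- the homotopies
  set m : C(↥U, X) := ⟨fun x => r ⟨g (x, 0), gmem (x, 0)⟩, by
    apply r.continuous.comp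
    apply Continuous.subtype_mk
    exact hgcont.comp (continuous_id.prodMk continuous_const)⟩ with hm
  have H1 : (ContinuousMap.setInclusion U).Homotopy m := {
    toContinuousMap := ⟨fun z => r ⟨(1 - (z.1 : ℝ)) • ι ((z.2 : ↥U) : X) + (z.1 : ℝ) • g (z.2, 0),
        hseg z.2 z.1⟩, by
      apply r.continuous.comp
      apply Continuous.subtype_mk
      apply Continuous.add
      · exact (continuous_const.sub (continuous_subtype_val.comp continuous_fst)).smul
          ((hiso.continuous.comp continuous_subtype_val).comp continuous_snd)
      · exact (continuous_subtype_val.comp continuous_fst).smul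
          (hgcont.comp (continuous_snd.prodMk continuous_const))⟩
    map_zero_left := by
      intro x
      simp only [ContinuousMap.coe_mk]
      have hval : (1 - ((0 : I) : ℝ)) • ι (x : X) + ((0 : I) : ℝ) • g (x, 0) = ι (x : X) := by
        norm_num
      have : (⟨(1 - ((0 : I) : ℝ)) • ι (x : X) + ((0 : I) : ℝ) • g (x, 0), hseg x 0⟩ : W)
          = ⟨ι (x : X), hmemW (x : X)⟩ := Subtype.ext hval
      rw [this]
      exact hr (x : X)
    map_one_left := by
      intro x
      simp only [ContinuousMap.coe_mk]
      have hval : (1 - ((1 : I) : ℝ)) • ι (x : X) + ((1 : I) : ℝ) • g (x, 0) = g (x, 0) := by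
        norm_num
      have : (⟨(1 - ((1 : I) : ℝ)) • ι (x : X) + ((1 : I) : ℝ) • g (x, 0), hseg x 1⟩ : W)
          = ⟨g (x, 0), gmem (x, 0)⟩ := Subtype.ext hval
      rw [this]
      rfl }
  have H2 : m.Homotopy (ContinuousMap.const ↥U y) := {
    toContinuousMap := ⟨fun z => r ⟨g (z.2, z.1), gmem (z.2, z.1)⟩, by
      apply r.continuous.comp
      apply Continuous.subtype_mk
      exact hgcont.comp (continuous_snd.prodMk continuous_fst)⟩
    map_zero_left := fun x => rfl
    map_one_left := by
      intro x
      simp only [ContinuousMap.coe_mk]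
      have : (⟨g (x, 1), gmem (x, 1)⟩ : W) = ⟨ι y, hmemW y⟩ := Subtype.ext (hgy x)
      rw [this]
      exact hr y }
  exact ⟨U, hUopen, hAU, ⟨y, ⟨H1.trans H2⟩⟩⟩


/-- For a compact metric ANR `X`, `cat_g X = cat X`. -/
theorem catg_eq_lsCat (X : Type u) [MetricSpace X] [CompactSpace X] (hX : IsANR X) :
    catg X = lsCat X := by
  have hset : {N : ℕ∞ | ∃ k : ℕ, N = k ∧ ∃ A : Fin (k + 1) → Set X,
      (⋃ i, A i) = Set.univ ∧ ∀ i, ContractibleIn (A i)} =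
      {N : ℕ∞ | ∃ k : ℕ, N = k ∧ ∃ A : Fin (k + 1) → Set X,
      (∀ i, IsOpen (A i)) ∧ (⋃ i, A i) = Set.univ ∧ ∀ i, ContractibleIn (A i)} := by
    ext N
    constructor
    · rintro ⟨k, hk, A, hcov, hcontr⟩
      choose Uo hUopen hUsub hUcontr using fun i => exists_open_contr hX (hcontr i)
      refine ⟨k, hk, Uo, hUopen, ?_, hUcontr⟩
      apply eq_univ_of_univ_subset
      rw [← hcov]
      exact iUnion_mono hUsub
    · rintro ⟨k, hk, A, _, hcov, hcontr⟩
      exact ⟨k, hk, A, hcov, hcontr⟩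
  unfold catg lsCat
  rw [hset]
end

section
/- If f : X → Y is a homotopy equivalence of topological spaces, then cat_g X = cat_g Y. -/
lemma catg_le_of_right_inverse {X : Type u} {Y : Type v}
    [TopologicalSpace X] [TopologicalSpace Y] (f : C(X, Y)) (g : C(Y, X))
    (h : (f.comp g).Homotopic (ContinuousMap.id Y)) : catg Y ≤ catg X := by
  apply sInf_le_sInf
  rintro N ⟨k, rfl, A, hcov, hcon⟩
  refine ⟨k, rfl, fun i => g ⁻¹' (A i), ?_, ?_⟩
  · rw [← Set.preimage_iUnion, hcov, Set.preimage_univ]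
  · intro i
    obtain ⟨x, hx⟩ := hcon i
    refine ⟨f x, ?_⟩
    let r : C((g ⁻¹' (A i) : Set Y), (A i : Set X)) :=
      ⟨fun b => ⟨g b, b.2⟩, by continuity⟩
    have h1 : ((f.comp g).comp (ContinuousMap.setInclusion (g ⁻¹' (A i)))).Homotopic
        ((ContinuousMap.id Y).comp (ContinuousMap.setInclusion (g ⁻¹' (A i)))) :=
      ContinuousMap.Homotopic.comp h (ContinuousMap.Homotopic.refl _)
    have h2 : (f.comp ((ContinuousMap.setInclusion (A i)).comp r)).Homotopic
        (f.comp ((ContinuousMap.const (↥(A i)) x).comp r)) :=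
      ContinuousMap.Homotopic.comp (ContinuousMap.Homotopic.refl f) (ContinuousMap.Homotopic.comp hx (ContinuousMap.Homotopic.refl r))
    have e1 : (ContinuousMap.id Y).comp (ContinuousMap.setInclusion (g ⁻¹' (A i))) =
        ContinuousMap.setInclusion (g ⁻¹' (A i)) := rfl
    have e2 : (f.comp g).comp (ContinuousMap.setInclusion (g ⁻¹' (A i))) =
        f.comp ((ContinuousMap.setInclusion (A i)).comp r) := rfl
    have e3 : f.comp ((ContinuousMap.const (↥(A i)) x).comp r) =
        ContinuousMap.const _ (f x) := rfl
    rw [e1] at h1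
    rw [e2] at h1
    rw [e3] at h2
    exact h1.symm.trans h2

/-- If `f : X → Y` is a homotopy equivalence, then
`cat_g X = cat_g Y`. -/
theorem catg_eq_of_homotopyEquiv {X : Type u} {Y : Type v}
    [TopologicalSpace X] [TopologicalSpace Y] (f : C(X, Y))
    (hf : ∃ g : C(Y, X), (f.comp g).Homotopic (ContinuousMap.id Y) ∧
      (g.comp f).Homotopic (ContinuousMap.id X)) :
    catg X = catg Y := by
  obtain ⟨g, h1, h2⟩ := hf
  exact le_antisymm (catg_le_of_right_inverse g f h2) (catg_le_of_right_inverse f g h1)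
end

section
/- Let X be a complete metric space and A ⊆ X a subset that is contractible in X. Then there exists a G_δ set B with A ⊆ B ⊆ X such that B is contractible in X. -/
open Filter Topology Metric Set

/-- Kuratowski extension: a continuous map from a subset of a metric space to a
complete metric space extends continuously to a `Gδ` superset. -/
lemma kuratowski_extend {Z Y : Type*} [MetricSpace Z] [MetricSpace Y] [CompleteSpace Y]
    [Nonempty Y] (S : Set Z) (f : S → Y) (hf : Continuous f) :
    ∃ G : Set Z, S ⊆ G ∧ IsGδ G ∧ ∃ g : Z → Y, ContinuousOn g G ∧ ∀ a : S, g a = f a := by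
  set U : ℕ → Set Z := fun n => {z | ∃ δ > 0, ∀ a b : S,
    dist (a : Z) z < δ → dist (b : Z) z < δ → dist (f a) (f b) < 1 / (n + 1)} with hU
  have hUopen : ∀ n, IsOpen (U n) := by
    intro n
    rw [Metric.isOpen_iff]
    rintro z ⟨δ, hδ, h⟩
    refine ⟨δ / 2, by positivity, fun z' hz' => ⟨δ / 2, by positivity, fun a b ha hb => ?_⟩⟩
    have hz'z : dist z' z < δ / 2 := hz'
    exact h a b (by linarith [dist_triangle (a : Z) z' z])
      (by linarith [dist_triangle (b : Z) z' z])
  set G : Set Z := closure S ∩ ⋂ n, U n with hG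
  have hSG : S ⊆ G := by
    intro a ha
    refine ⟨subset_closure ha, mem_iInter.2 fun n => ?_⟩
    have hε : (0:ℝ) < 1 / (2 * (n + 1)) := by positivity
    obtain ⟨δ, hδ, hδ'⟩ := Metric.continuous_iff.mp hf ⟨a, ha⟩ _ hε
    refine ⟨δ, hδ, fun p q hp hq => ?_⟩
    have hp' : dist (f p) (f ⟨a, ha⟩) < 1 / (2 * (n + 1)) := hδ' p (by rwa [Subtype.dist_eq])
    have hq' : dist (f q) (f ⟨a, ha⟩) < 1 / (2 * (n + 1)) := hδ' q (by rwa [Subtype.dist_eq])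
    have : (1:ℝ) / (2 * (n + 1)) + 1 / (2 * (n + 1)) = 1 / (n + 1) := by
      rw [mul_comm, ← div_div, add_halves]
    calc dist (f p) (f q) ≤ dist (f p) (f ⟨a, ha⟩) + dist (f ⟨a, ha⟩) (f q) := dist_triangle _ _ _
      _ < 1 / (2 * (n + 1)) + 1 / (2 * (n + 1)) := by rw [dist_comm (f ⟨a, ha⟩)]; linarith
      _ = 1 / (n + 1) := this
  have hneBot : ∀ z ∈ G, NeBot (comap ((↑) : S → Z) (𝓝 z)) := fun z hz =>
    mem_closure_iff_comap_neBot.mp hz.1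
  have hcauchy : ∀ z ∈ G, Cauchy (map f (comap ((↑) : S → Z) (𝓝 z))) := by
    intro z hz
    rw [Metric.cauchy_iff]
    refine ⟨(hneBot z hz).map f, fun ε hε => ?_⟩
    obtain ⟨n, hn⟩ := exists_nat_one_div_lt hε
    obtain ⟨δ, hδ, h⟩ := mem_iInter.1 hz.2 n
    refine ⟨f '' {a : S | dist (a : Z) z < δ}, ?_, ?_⟩
    · apply image_mem_map
      exact preimage_mem_comap (Metric.ball_mem_nhds z hδ)
    · rintro x ⟨a, ha, rfl⟩ y ⟨b, hb, rfl⟩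
      exact lt_trans (h a b ha hb) hn
  have hlim : ∀ z, z ∈ G → ∃ y, Tendsto f (comap ((↑) : S → Z) (𝓝 z)) (𝓝 y) := fun z hz =>
    CompleteSpace.complete (hcauchy z hz)
  choose g' hg' using hlim
  classical
  set g : Z → Y := fun z => if h : z ∈ G then g' z h else Classical.arbitrary Y with hgdef
  have hgz : ∀ z (h : z ∈ G), Tendsto f (comap ((↑) : S → Z) (𝓝 z)) (𝓝 (g z)) := by
    intro z h
    simp only [hgdef, dif_pos h]
    exact hg' z h
  -- a point of `f` close to the limit and close in the base
  have key : ∀ z ∈ G, ∀ η > 0, ∀ ρ > 0, ∃ a : S, dist (a : Z) z < ρ ∧ dist (f a) (g z) < η := by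
    intro z hz η hη ρ hρ
    haveI := hneBot z hz
    have h1 : {a : S | dist (a : Z) z < ρ} ∈ comap ((↑) : S → Z) (𝓝 z) :=
      preimage_mem_comap (Metric.ball_mem_nhds z hρ)
    have h2 : {a : S | dist (f a) (g z) < η} ∈ comap ((↑) : S → Z) (𝓝 z) :=
      (hgz z hz) (Metric.ball_mem_nhds (g z) hη)
    obtain ⟨a, ha1, ha2⟩ := Filter.nonempty_of_mem (Filter.inter_mem h1 h2)
    exact ⟨a, ha1, ha2⟩
  refine ⟨G, hSG, ?_, g, ?_, ?_⟩
  · exact IsGδ.inter (isClosed_closure.isGδ) (IsGδ.iInter fun n => (hUopen n).isGδ)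
  · rw [Metric.continuousOn_iff]
    intro z hz ε hε
    have hε3 : (0:ℝ) < ε / 3 := by positivity
    obtain ⟨n, hn⟩ := exists_nat_one_div_lt hε3
    obtain ⟨δ, hδ, h⟩ := mem_iInter.1 hz.2 n
    refine ⟨δ / 2, by positivity, fun z' hz' hdist => ?_⟩
    obtain ⟨a, ha1, ha2⟩ := key z' hz' (ε / 3) hε3 (δ / 2) (by positivity)
    obtain ⟨b, hb1, hb2⟩ := key z hz (ε / 3) hε3 (δ / 2) (by positivity)
    have haz : dist (a : Z) z < δ := by linarith [dist_triangle (a : Z) z' z]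
    have hbz : dist (b : Z) z < δ := by linarith
    have hab : dist (f a) (f b) < 1 / (n + 1) := h a b haz hbz
    calc dist (g z') (g z) ≤ dist (g z') (f a) + dist (f a) (f b) + dist (f b) (g z) :=
          dist_triangle4 _ _ _ _
      _ < ε / 3 + 1 / (n + 1) + ε / 3 := by
          rw [dist_comm (g z') (f a)]; linarith
      _ < ε := by linarith
  · intro a
    haveI := hneBot (a : Z) (hSG a.2)
    have h1 : Tendsto f (comap ((↑) : S → Z) (𝓝 (a : Z))) (𝓝 (g a)) := hgz a (hSG a.2)
    have h2 : Tendsto f (comap ((↑) : S → Z) (𝓝 (a : Z))) (𝓝 (f a)) := by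
      rw [← nhds_subtype_eq_comap (x := (a : Z)) (h := a.2)]
      exact (hf.tendsto _).comp (by simp [Subtype.coe_eta]; exact tendsto_id)
    exact tendsto_nhds_unique h1 h2

/-- Let `X` be a complete metric space and `A ⊆ X` contractible in
`X`. Then there is a `G_δ` set `B` with `A ⊆ B ⊆ X` that is contractible in `X`. -/
theorem exists_Gdelta_contractibleIn {X : Type u} [MetricSpace X] [CompleteSpace X]
    (A : Set X) (hA : ContractibleIn A) :
    ∃ B : Set X, A ⊆ B ∧ IsGδ B ∧ ContractibleIn B := by
  obtain ⟨c, ⟨F⟩⟩ := hA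
  haveI : Nonempty X := ⟨c⟩
  set S : Set (X × unitInterval) := A ×ˢ Set.univ with hS
  set f : S → X := fun p => F (p.1.2, ⟨p.1.1, p.2.1⟩) with hfdef
  have hfc : Continuous f :=
    F.continuous.comp ((continuous_snd.comp continuous_subtype_val).prodMk
      (Continuous.subtype_mk (continuous_fst.comp continuous_subtype_val) _))
  obtain ⟨G, hSG, hGδ, g, hg, hgf⟩ := kuratowski_extend S f hfc
  -- the tube set
  set B₀ : Set X := {x | ∀ t : unitInterval, (x, t) ∈ G} with hB₀def
  have hB₀Gδ : IsGδ B₀ := by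
    obtain ⟨T, hTopen, hTcount, hTeq⟩ := hGδ
    have htube : ∀ U : Set (X × unitInterval), IsOpen U →
        IsOpen {x : X | ∀ t : unitInterval, (x, t) ∈ U} := by
      intro U hU
      have : {x : X | ∀ t : unitInterval, (x, t) ∈ U} = (Prod.fst '' Uᶜ)ᶜ := by
        ext x
        simp only [Set.mem_setOf_eq, Set.mem_compl_iff, Set.mem_image, Prod.exists, not_exists]
        constructor
        · rintro h a t ⟨hU', rfl⟩; exact hU' (h t)
        · intro h t; by_contra hc'; exact h x t ⟨hc', rfl⟩
      rw [this]
      exact (isClosedMap_fst_of_compactSpace _ hU.isClosed_compl).isOpen_compl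
    have : B₀ = ⋂ U ∈ T, {x : X | ∀ t : unitInterval, (x, t) ∈ U} := by
      ext x
      simp only [hB₀def, Set.mem_setOf_eq, hTeq, Set.mem_sInter, Set.mem_iInter]
      tauto
    rw [this]
    exact IsGδ.biInter_of_isOpen hTcount fun U hU => htube U (hTopen U hU)
  have hKcont : Continuous fun x : B₀ => (g (x.1, 0), g (x.1, 1)) := by
    refine Continuous.prodMk ?_ ?_ <;>
      exact hg.comp_continuous (continuous_subtype_val.prodMk continuous_const)
        (fun x => x.2 _)
  have hE : IsClosed {x : B₀ | g (x.1, 0) = x.1 ∧ g (x.1, 1) = c} := by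
    have h1 : IsClosed {x : B₀ | g (x.1, 0) = x.1} :=
      isClosed_eq (continuous_fst.comp hKcont) continuous_subtype_val
    have h2 : IsClosed {x : B₀ | g (x.1, 1) = c} :=
      isClosed_eq (continuous_snd.comp hKcont) continuous_const
    exact h1.inter h2
  obtain ⟨Fc, hFc, hFcE⟩ := isClosed_induced_iff.mp hE
  refine ⟨B₀ ∩ Fc, ?_, hB₀Gδ.inter hFc.isGδ, ?_⟩
  · -- A ⊆ B
    intro a ha
    have haB₀ : a ∈ B₀ := fun t => hSG ⟨ha, Set.mem_univ _⟩
    have h0 : g (a, 0) = a := by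
      have := hgf ⟨(a, (0 : unitInterval)), ⟨ha, Set.mem_univ _⟩⟩
      simpa [hfdef, ContinuousMap.setInclusion] using this.trans (F.apply_zero _)
    have h1 : g (a, 1) = c := by
      have := hgf ⟨(a, (1 : unitInterval)), ⟨ha, Set.mem_univ _⟩⟩
      simpa [hfdef] using this
    refine ⟨haB₀, ?_⟩
    have hm : (⟨a, haB₀⟩ : B₀) ∈ Subtype.val ⁻¹' Fc := by
      rw [hFcE]; exact ⟨h0, h1⟩
    exact hm
  · -- contractible
    have hmem : ∀ x : X, x ∈ B₀ ∩ Fc → g (x, 0) = x ∧ g (x, 1) = c := by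
      rintro x ⟨h1, h2⟩
      have : (⟨x, h1⟩ : B₀) ∈ Subtype.val ⁻¹' Fc := h2
      rw [hFcE] at this
      exact this
    refine ⟨c, ⟨ContinuousMap.Homotopy.mk ⟨fun p => g (p.2.1, p.1), ?_⟩ ?_ ?_⟩⟩
    · exact hg.comp_continuous
        ((continuous_subtype_val.comp continuous_snd).prodMk continuous_fst)
        (fun p => p.2.2.1 p.1)
    · intro x; exact (hmem x.1 x.2).1
    · intro x; exact (hmem x.1 x.2).2
end

section
/- (Kolmogorov–Ostrand Lemma) Let A_0, …, A_{m+n} be an (n+1)-cover of a set X and let B_0, …, B_{m+n} be an (m+1)-cover of a set Y. Then the family A_0 × B_0, …, A_{m+n} × B_{m+n} is a cover of X × Y, i.e., ⋃_{i=0}^{m+n} (A_i × B_i) = X × Y. -/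
open Classical

lemma miss_card_le {X : Type*} {N k : ℕ} (A : Fin N → Set X) (x : X)
    (hA : ∀ s : Finset (Fin N), s.card = k + 1 → (⋃ i ∈ s, A i) = Set.univ) :
    (Finset.univ.filter (fun i => x ∉ A i)).card ≤ k := by
  by_contra h
  push_neg at h
  obtain ⟨t, hts, htc⟩ := Finset.exists_subset_card_eq h
  have := hA t htc
  have hx : x ∈ (⋃ i ∈ t, A i) := this ▸ Set.mem_univ x
  simp only [Set.mem_iUnion] at hx
  obtain ⟨i, hit, hxi⟩ := hx
  have := hts hit
  simp at this
  exact this hxi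

/-- **Kolmogorov–Ostrand Lemma.** If `A_0, …, A_{m+n}` is an
`(n+1)`-cover of `X` (every `n+1` of the sets cover `X`) and `B_0, …, B_{m+n}` is an
`(m+1)`-cover of `Y`, then the products `A_i × B_i` cover `X × Y`. -/
theorem kolmogorov_ostrand {X : Type u} {Y : Type v} (m n : ℕ)
    (A : Fin (m + n + 1) → Set X) (B : Fin (m + n + 1) → Set Y)
    (hA : ∀ s : Finset (Fin (m + n + 1)), s.card = n + 1 → (⋃ i ∈ s, A i) = Set.univ)
    (hB : ∀ s : Finset (Fin (m + n + 1)), s.card = m + 1 → (⋃ i ∈ s, B i) = Set.univ) :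
    (⋃ i, A i ×ˢ B i) = Set.univ := by
  ext ⟨x, y⟩
  simp only [Set.mem_iUnion, Set.mem_univ, iff_true, Set.mem_prod]
  have h1 := miss_card_le A x hA
  have h2 := miss_card_le B y hB
  by_contra h
  push_neg at h
  have hsub : (Finset.univ : Finset (Fin (m + n + 1))) ⊆
      (Finset.univ.filter (fun i => x ∉ A i)) ∪ (Finset.univ.filter (fun i => y ∉ B i)) := by
    intro i _
    simp only [Finset.mem_union, Finset.mem_filter, Finset.mem_univ, true_and]
    by_contra hc
    push_neg at hc
    exact (h i hc.1) hc.2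
  have := Finset.card_le_card hsub
  have hcu : (Finset.univ : Finset (Fin (m + n + 1))).card = m + n + 1 := by simp
  have := this.trans (Finset.card_union_le _ _)
  omega
end
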